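/- Suppose φ has only finitely many chain components M₁, …, M_n (so that they form the finest Morse decomposition of φ on E). Then the Lyapunov spectrum of the whole space is contained in the union of the Morse spectra of the chain components: Λ_Ly(E) ⊆ Λ_Mo(M₁) ∪ ⋯ ∪ Λ_Mo(M_n). -/

import Mathlib

open Filter Topology

section

variable {E : Type*} [MetricSpace E] [CompactSpace E]
variable {V : Type*} [NormedAddCommGroup V] [NormedSpace ℝ V] [FiniteDimensional ℝ V]

/-- `a` is a continuous `V`-valued cocycle over the flow `φ`. -/
def IsAddCocycle (φ : Flow ℝ E) (a : ℝ → E → V) : Prop :=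
  Continuous (fun p : ℝ × E => a p.1 p.2) ∧
    ∀ t s x, a (t + s) x = a t (φ s x) + a s x

/-- `(N, x, t)` is an `(ε, T)`-chain of the flow `φ` from `p` to `q`:
points `x 0 = p, x 1, …, x N = q` and times `t 0, …, t (N-1)` with `t i ≥ T`
and `dist (φ (t i) (x i)) (x (i+1)) < ε`. -/
def IsFlowChain (φ : Flow ℝ E) (ε T : ℝ) (N : ℕ) (x : ℕ → E) (t : ℕ → ℝ) (p q : E) : Prop :=
  0 < N ∧ x 0 = p ∧ x N = q ∧ (∀ i < N, T ≤ t i) ∧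
    ∀ i < N, dist (φ (t i) (x i)) (x (i + 1)) < ε

/-- The finite-time Morse exponent of a chain:
`(1 / (t 0 + ⋯ + t (N-1))) • (a (t 0) (x 0) + ⋯ + a (t (N-1)) (x (N-1)))`. -/
noncomputable def chainExp (a : ℝ → E → V) (N : ℕ) (x : ℕ → E) (t : ℕ → ℝ) : V :=
  (∑ i ∈ Finset.range N, t i)⁻¹ • ∑ i ∈ Finset.range N, a (t i) (x i)

/-- The Morse spectrum of `M ⊆ E`: intersection over `ε, T > 0` of the closures
of the sets of finite-time Morse exponents of `(ε,T)`-chains belonging to `M`. -/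
noncomputable def morseSpec (φ : Flow ℝ E) (a : ℝ → E → V) (M : Set E) : Set V :=
  ⋂ (ε : ℝ) (_ : 0 < ε) (T : ℝ) (_ : 0 < T), closure
    {v | ∃ N x t, ∃ p ∈ M, ∃ q ∈ M, IsFlowChain φ ε T N x t p q ∧ v = chainExp a N x t}

/-- `M` is chain transitive: any two points of `M` are joined by `(ε,T)`-chains
for all `ε, T > 0`. -/
def IsChainTransitiveSet (φ : Flow ℝ E) (M : Set E) : Prop :=
  ∀ p ∈ M, ∀ q ∈ M, ∀ ε > (0:ℝ), ∀ T > (0:ℝ), ∃ N x t, IsFlowChain φ ε T N x t p q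

/-- A chain component is a maximal chain transitive subset. -/
def IsChainComponent (φ : Flow ℝ E) (M : Set E) : Prop :=
  IsChainTransitiveSet φ M ∧
    ∀ M' : Set E, IsChainTransitiveSet φ M' → M ⊆ M' → M = M'


/-- The Lyapunov exponent of the cocycle `a` at `x` exists and equals `l`,
i.e. `(1/T) • a T x → l` as `T → +∞`. -/
def HasLyapExp (a : ℝ → E → V) (x : E) (l : V) : Prop :=
  Tendsto (fun T : ℝ => T⁻¹ • a T x) atTop (𝓝 l)

/-- The Lyapunov spectrum of a subset `Y ⊆ E`. -/
def lyapSpec (a : ℝ → E → V) (Y : Set E) : Set V :=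
  {l | ∃ x ∈ Y, HasLyapExp a x l}


private lemma key_chain (φ : Flow ℝ E) (a : ℝ → E → V) (ha : IsAddCocycle φ a)
    (x : E) (l : V) (hx : HasLyapExp a x l) (p : E)
    (hp : MapClusterPt p atTop (fun t : ℝ => φ t x)) :
    ∀ ε > (0:ℝ), ∀ T > (0:ℝ), ∀ η > (0:ℝ),
      ∃ N xs ts, IsFlowChain φ ε T N xs ts p p ∧ dist (chainExp a N xs ts) l < η := by
  intro ε hε T hT η hη
  -- continuity of φ T at p
  have hcont : Continuous (fun y : E => φ T y) := φ.continuous continuous_const continuous_id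
  obtain ⟨δ, hδ, hδ'⟩ := Metric.continuousAt_iff.mp (hcont.continuousAt (x := p)) ε hε
  -- choose S with φ S x close to p
  obtain ⟨S, hS⟩ : ∃ S : ℝ, dist (φ S x) p < δ := by
    have := mapClusterPt_iff_frequently.mp hp (Metric.ball p δ) (Metric.ball_mem_nhds p hδ)
    exact this.exists
  set c : V := a T p - a (S + T) x with hc
  set f : ℝ → V := fun S' => (S' - S)⁻¹ • (a S' x + c) with hf
  -- f tends to l
  have hsub : Tendsto (fun S' : ℝ => S' - S) atTop atTop :=
    tendsto_atTop_add_const_right atTop (-S) tendsto_id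
  have h1 : Tendsto (fun S' : ℝ => (S' - S)⁻¹) atTop (𝓝 0) :=
    tendsto_inv_atTop_zero.comp hsub
  have hterm2 : Tendsto (fun S' : ℝ => (S' - S)⁻¹ • c) atTop (𝓝 (0:V)) := by
    simpa using h1.smul_const c
  have hratio : Tendsto (fun S' : ℝ => 1 + S * (S' - S)⁻¹) atTop (𝓝 1) := by
    have := (h1.const_mul S).const_add (1:ℝ)
    simpa using this
  have hterm1 : Tendsto (fun S' : ℝ => (S' - S)⁻¹ • a S' x) atTop (𝓝 l) := by
    have h2 : Tendsto (fun S' : ℝ => (1 + S * (S' - S)⁻¹) • (S'⁻¹ • a S' x)) atTop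
        (𝓝 ((1:ℝ) • l)) := hratio.smul hx
    rw [one_smul] at h2
    refine h2.congr' ?_
    filter_upwards [eventually_gt_atTop (max S 0)] with S' hS'
    have h3 : S' ≠ 0 := by
      have := lt_of_le_of_lt (le_max_right S 0) hS'; positivity
    have h4 : S' - S ≠ 0 := by
      have := lt_of_le_of_lt (le_max_left S 0) hS'; intro h; nlinarith
    rw [smul_smul]
    congr 1
    field_simp
    ring
  have hfl : Tendsto f atTop (𝓝 l) := by
    have := hterm1.add hterm2
    rw [add_zero] at this
    refine Tendsto.congr ?_ this
    intro S'; simp [hf, smul_add]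
  -- pick S'
  have hev : ∀ᶠ S' in atTop, dist (f S') l < η ∧ S + 2 * T ≤ S' :=
    ((Metric.tendsto_nhds.mp hfl η hη).and (eventually_ge_atTop (S + 2 * T)))
  have hfreq : ∃ᶠ S' in atTop, dist (φ S' x) p < ε := by
    have := mapClusterPt_iff_frequently.mp hp (Metric.ball p ε) (Metric.ball_mem_nhds p hε)
    exact this
  obtain ⟨S', hS'1, hS'2, hS'3⟩ := (hfreq.and_eventually hev).exists
  -- the chain
  refine ⟨2, fun i => if i = 1 then φ (S + T) x else p,
    fun i => if i = 0 then T else S' - (S + T), ?_, ?_⟩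
  · refine ⟨two_pos, by norm_num, by norm_num, ?_, ?_⟩
    · intro i hi
      interval_cases i
      · simp
      · simp only [if_neg one_ne_zero]
        linarith
    · intro i hi
      interval_cases i
      · simp only [if_pos rfl, if_neg one_ne_zero, reduceIte]
        have : φ T (φ S x) = φ (S + T) x := by
          rw [← φ.map_add, add_comm]
        rw [← this, dist_comm]
        exact hδ' hS
      · simp only [if_neg one_ne_zero, if_pos rfl]
        norm_num
        have : φ (S' - (S + T)) (φ (S + T) x) = φ S' x := by
          rw [← φ.map_add]; ring_nf
        rw [this]
        exact hS'1
  · have hsum : chainExp a 2 (fun i => if i = 1 then φ (S + T) x else p)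
        (fun i => if i = 0 then T else S' - (S + T)) = f S' := by
      have hcoc := ha.2 (S' - (S + T)) (S + T) x
      have harg : S' - (S + T) + (S + T) = S' := by ring
      rw [harg] at hcoc
      simp only [chainExp, Finset.sum_range_succ, Finset.sum_range_zero]
      norm_num
      rw [hf, hc]
      have h5 : T + (S' - (S + T)) = S' - S := by ring
      rw [h5]
      have : a (S' - (S + T)) (φ (S + T) x) = a S' x - a (S + T) x := by
        rw [hcoc]; abel
      rw [this]; module
    rw [hsum]
    exact hS'2

/-- If the flow has only finitely many chain components `M 0, …, M (n-1)` (which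
then form the finest Morse decomposition), the Lyapunov spectrum of the whole
space is contained in the union of their Morse spectra. -/
theorem lyapSpec_subset_union_morseSpec (φ : Flow ℝ E) (a : ℝ → E → V)
    (ha : IsAddCocycle φ a) (n : ℕ) (M : Fin n → Set E)
    (hM : ∀ i, IsChainComponent φ (M i))
    (hall : ∀ M' : Set E, IsChainComponent φ M' → ∃ i, M' = M i) :
    lyapSpec a (Set.univ : Set E) ⊆ ⋃ i, morseSpec φ a (M i) := by
  intro l hl
  obtain ⟨x, -, hx⟩ := hl
  -- a cluster point p of the forward orbit of x
  haveI : (Filter.map (fun t : ℝ => φ t x) atTop).NeBot := Filter.map_neBot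
  obtain ⟨p, hp⟩ := exists_clusterPt_of_compactSpace (Filter.map (fun t : ℝ => φ t x) atTop)
  have hp' : MapClusterPt p atTop (fun t : ℝ => φ t x) := hp
  have key := key_chain φ a ha x l hx p hp'
  -- {p} is chain transitive
  have hpt : IsChainTransitiveSet φ ({p} : Set E) := by
    intro q hq r hr ε hε T hT
    rw [Set.mem_singleton_iff] at hq hr
    subst hq; subst hr
    obtain ⟨N, xs, ts, hch, -⟩ := key ε hε T hT 1 one_pos
    exact ⟨N, xs, ts, hch⟩
  -- Zorn: maximal chain transitive set containing p
  obtain ⟨m, hpm, hmax⟩ := zorn_subset_nonempty {M' : Set E | IsChainTransitiveSet φ M'}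
    (fun c hcS hchain _hne => by
      refine ⟨⋃₀ c, ?_, fun s hs => Set.subset_sUnion_of_mem hs⟩
      intro q hq r hr ε hε T hT
      obtain ⟨s, hs, hqs⟩ := hq
      obtain ⟨t', ht', hrt'⟩ := hr
      rcases eq_or_ne s t' with rfl | hne
      · exact hcS hs q hqs r hrt' ε hε T hT
      · rcases hchain hs ht' hne with h | h
        · exact hcS ht' q (h hqs) r hrt' ε hε T hT
        · exact hcS hs q hqs r (h hrt') ε hε T hT)
    ({p} : Set E) hpt
  have hcomp : IsChainComponent φ m := by
    refine ⟨hmax.prop, fun M' hM' hsub => ?_⟩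
    exact subset_antisymm hsub (hmax.le_of_ge hM' hsub)
  obtain ⟨i, him⟩ := hall m hcomp
  have hpM : p ∈ M i := him ▸ hpm (Set.mem_singleton p)
  -- l belongs to the Morse spectrum of M i
  refine Set.mem_iUnion.mpr ⟨i, ?_⟩
  simp only [morseSpec, Set.mem_iInter]
  intro ε hε T hT
  rw [Metric.mem_closure_iff]
  intro η hη
  obtain ⟨N, xs, ts, hch, hd⟩ := key ε hε T hT η hη
  exact ⟨chainExp a N xs ts, ⟨N, xs, ts, p, hpM, p, hpM, hch, rfl⟩, by rwa [dist_comm] at hd⟩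

end
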